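/- For jointly distributed discrete random variables (A, B) for the 'past' and (A', B') for the 'future', the identity I((A,B);(A',B')) = I(A;A') + I((A,B); B' | A') + I(A'; B | A) holds. -/
import Mathlib


open Real BigOperators

/-- Probability that the random variable `X` takes the value `x`,
under the weight function `μ` on a finite sample space `Ω`. -/
noncomputable def pr {Ω α : Type*} [Fintype Ω] [DecidableEq α]
    (μ : Ω → ℝ) (X : Ω → α) (x : α) : ℝ :=
  ∑ ω, if X ω = x then μ ω else 0

/-- Shannon entropy of the random variable `X`. -/
noncomputable def ent {Ω α : Type*} [Fintype Ω] [Fintype α] [DecidableEq α]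
    (μ : Ω → ℝ) (X : Ω → α) : ℝ :=
  ∑ x, Real.negMulLog (pr μ X x)

/-- Mutual information `I(X;Y) = H(X) + H(Y) - H(X,Y)`. -/
noncomputable def mi {Ω α β : Type*} [Fintype Ω]
    [Fintype α] [Fintype β] [DecidableEq α] [DecidableEq β]
    (μ : Ω → ℝ) (X : Ω → α) (Y : Ω → β) : ℝ :=
  ent μ X + ent μ Y - ent μ (fun ω => (X ω, Y ω))

/-- Conditional mutual information `I(X;Z|W) = H(X,W) + H(Z,W) - H(X,Z,W) - H(W)`. -/
noncomputable def condMI {Ω α β γ : Type*} [Fintype Ω]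
    [Fintype α] [Fintype β] [Fintype γ]
    [DecidableEq α] [DecidableEq β] [DecidableEq γ]
    (μ : Ω → ℝ) (X : Ω → α) (Z : Ω → β) (W : Ω → γ) : ℝ :=
  ent μ (fun ω => (X ω, W ω)) + ent μ (fun ω => (Z ω, W ω))
    - ent μ (fun ω => (X ω, Z ω, W ω)) - ent μ W


lemma ent_map {Ω α β : Type*} [Fintype Ω] [Fintype α] [Fintype β]
    [DecidableEq α] [DecidableEq β]
    (μ : Ω → ℝ) (X : Ω → α) (e : α ≃ β) :
    ent μ (fun ω => e (X ω)) = ent μ X := by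
  unfold ent
  refine (Fintype.sum_equiv e _ _ ?_).symm
  intro x
  congr 1
  unfold pr
  refine Finset.sum_congr rfl fun ω _ => ?_
  simp [e.apply_eq_iff_eq]

/-- Decomposition of the joint excess entropy:
`I((A,B);(A',B')) = I(A;A') + I((A,B); B' | A') + I(A'; B | A)`. -/
theorem joint_excess_entropy_decomposition
    {Ω α β α' β' : Type*} [Fintype Ω]
    [Fintype α] [Fintype β] [Fintype α'] [Fintype β']
    [DecidableEq α] [DecidableEq β] [DecidableEq α'] [DecidableEq β']
    (μ : Ω → ℝ) (hμ : ∀ ω, 0 ≤ μ ω) (hsum : ∑ ω, μ ω = 1)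
    (A : Ω → α) (B : Ω → β) (A' : Ω → α') (B' : Ω → β') :
    mi μ (fun ω => (A ω, B ω)) (fun ω => (A' ω, B' ω))
      = mi μ A A' + condMI μ (fun ω => (A ω, B ω)) B' A' + condMI μ A' B A := by
  have h1 : ent μ (fun ω => (B' ω, A' ω)) = ent μ (fun ω => (A' ω, B' ω)) :=
    ent_map μ (fun ω => (A' ω, B' ω)) (Equiv.prodComm α' β')
  have h2 : ent μ (fun ω => ((A ω, B ω), B' ω, A' ω))
      = ent μ (fun ω => ((A ω, B ω), A' ω, B' ω)) :=
    ent_map μ (fun ω => ((A ω, B ω), A' ω, B' ω))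
      (Equiv.prodCongr (Equiv.refl _) (Equiv.prodComm α' β'))
  have h3 : ent μ (fun ω => (A' ω, A ω)) = ent μ (fun ω => (A ω, A' ω)) :=
    ent_map μ (fun ω => (A ω, A' ω)) (Equiv.prodComm α α')
  have h4 : ent μ (fun ω => (B ω, A ω)) = ent μ (fun ω => (A ω, B ω)) :=
    ent_map μ (fun ω => (A ω, B ω)) (Equiv.prodComm α β)
  have h5 : ent μ (fun ω => (A' ω, B ω, A ω)) = ent μ (fun ω => ((A ω, B ω), A' ω)) :=
    ent_map μ (fun ω => ((A ω, B ω), A' ω))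
      ⟨fun p => (p.2, p.1.2, p.1.1), fun p => ((p.2.2, p.2.1), p.1),
        fun p => rfl, fun p => rfl⟩
  unfold mi condMI
  rw [h1, h2, h3, h4, h5]
  ring
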